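/- Let κ be a regular uncountable cardinal and assume principle C⁻(κ). Then for every family 𝓐 of infinite subsets of ℕ with |𝓐| = κ and every natural number k ≥ 1, either (a) there is 𝓑 ⊆ 𝓐 with |𝓑| = κ such that ⋂𝓑' is infinite for every k-element subfamily 𝓑' of 𝓑, or (b) there are subfamilies 𝓑_0, …, 𝓑_{k−1} of 𝓐, each of cardinality κ, such that ⋂_{i<k} (⋃𝓑_i) is finite. -/

import Mathlib

open Cardinal

/-- `C` is closed and unbounded (club) in the ordinal `o`. -/
def ClubIn (o : Ordinal) (C : Set Ordinal) : Prop :=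
  C ⊆ Set.Iio o ∧ (∀ α < o, ∃ β ∈ C, α < β) ∧
    ∀ α < o, 0 < α → (∀ β < α, ∃ γ ∈ C, β < γ ∧ γ < α) → α ∈ C

/-- `S` is a stationary subset of the ordinal `o`: it meets every club subset of `o`. -/
def StationaryIn (o : Ordinal) (S : Set Ordinal) : Prop :=
  S ⊆ Set.Iio o ∧ ∀ C, ClubIn o C → (S ∩ C).Nonempty

/-- `S` is a cofinal (unbounded) subset of the ordinal `o`. -/
def CofinalIn (o : Ordinal) (S : Set Ordinal) : Prop :=
  S ⊆ Set.Iio o ∧ ∀ α < o, ∃ β ∈ S, α < β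

/-- For a matrix `A` of subsets of `ℕ`, a finite sequence `t ∈ ω^{<ω}` and
`s : {0,…,|t|-1} → Ordinal`, this is `A[s,t] = ⋂_{i<|t|} A(s i, t i)`. -/
def MatInt (A : Ordinal → ℕ → Set ℕ) (t : List ℕ) (s : Fin t.length → Ordinal) : Set ℕ :=
  ⋂ i, A (s i) (t.get i)

/-- Principle C⁻(κ). -/
def PrincipleCminus (κ : Cardinal) : Prop :=
  ∀ (T : Set (List ℕ)) (A : Ordinal → ℕ → Set ℕ),
    (∃ S : Set Ordinal, CofinalIn κ.ord S ∧
      ∀ t ∈ T, ∀ s : Fin t.length → Ordinal, Function.Injective s →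
        (∀ i, s i ∈ S) → (MatInt A t s).Nonempty) ∨
    (∃ t ∈ T, ∃ D : Fin t.length → Set Ordinal,
      (∀ i, CofinalIn κ.ord (D i)) ∧
      ∀ s : Fin t.length → Ordinal, Function.Injective s →
        (∀ i, s i ∈ D i) → MatInt A t s = ∅)

noncomputable def stepFn (D : ℕ → Set Ordinal) (b : Ordinal) : ℕ → Ordinal
  | 0 => sInf {γ | γ ∈ D 0 ∧ b < γ}
  | n+1 => sInf {γ | γ ∈ D (n+1) ∧ stepFn D b n < γ}

noncomputable def GFn (D : ℕ → Set Ordinal) (k : ℕ) (ξ : Ordinal) : ℕ → Ordinal :=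
  stepFn D (⨆ x : ξ.ToType, GFn D k ((Ordinal.ToType.mk (o := ξ)).symm x).1 (k-1) + 1)
termination_by ξ
decreasing_by exact ((Ordinal.ToType.mk (o := ξ)).symm x).2

lemma stepFn_props {o : Ordinal} {D : ℕ → Set Ordinal} {b : Ordinal} {k : ℕ}
    (hD : ∀ i < k, CofinalIn o (D i)) (hb : b < o) :
    ∀ i < k, stepFn D b i ∈ D i ∧ b < stepFn D b i ∧ stepFn D b i < o ∧
      ∀ j < i, stepFn D b j < stepFn D b i := by
  intro i
  induction i with
  | zero =>
    intro hi
    obtain ⟨β, hβ, hbβ⟩ := (hD 0 hi).2 b hb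
    have hne : {γ | γ ∈ D 0 ∧ b < γ}.Nonempty := ⟨β, hβ, hbβ⟩
    have hmem := csInf_mem hne
    refine ⟨hmem.1, hmem.2, ?_, by omega⟩
    exact lt_of_le_of_lt (csInf_le' (⟨hβ, hbβ⟩ : β ∈ {γ | γ ∈ D 0 ∧ b < γ})) ((hD 0 hi).1 hβ)
  | succ n ih =>
    intro hi
    obtain ⟨hmemn, hbn, hno, hchain⟩ := ih (Nat.lt_of_succ_lt hi)
    obtain ⟨β, hβ, hbβ⟩ := (hD (n+1) hi).2 _ hno
    have hne : {γ | γ ∈ D (n+1) ∧ stepFn D b n < γ}.Nonempty := ⟨β, hβ, hbβ⟩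
    have hmem := csInf_mem hne
    refine ⟨hmem.1, hbn.trans hmem.2, ?_, ?_⟩
    · exact lt_of_le_of_lt (csInf_le' (⟨hβ, hbβ⟩ : β ∈ {γ | γ ∈ D (n+1) ∧ stepFn D b n < γ}))
        ((hD (n+1) hi).1 hβ)
    · intro j hj
      rcases Nat.lt_or_ge j n with h | h
      · exact (hchain j h).trans hmem.2
      · have : j = n := by omega
        subst this; exact hmem.2

lemma GFn_main {κ : Cardinal.{0}} (hreg : κ.IsRegular) (hunc : ℵ₀ < κ)
    {D : ℕ → Set Ordinal} {k : ℕ} (hk : 0 < k)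
    (hD : ∀ i < k, CofinalIn κ.ord (D i)) :
    ∀ ξ < κ.ord,
      (∀ i < k, GFn D k ξ i ∈ D i ∧ GFn D k ξ i < κ.ord ∧ ξ < GFn D k ξ i ∧
        ∀ j < i, GFn D k ξ j < GFn D k ξ i) ∧
      ∀ η < ξ, GFn D k η (k-1) < GFn D k ξ 0 := by
  have hlim := Cardinal.isSuccLimit_ord hunc.le
  intro ξ
  induction ξ using Ordinal.induction with
  | h ξ IH =>
    intro hξ
    set f : ξ.ToType → Ordinal :=
      fun x => GFn D k ((Ordinal.ToType.mk (o := ξ)).symm x).1 (k-1) + 1 with hf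
    have hGeq : GFn D k ξ = stepFn D (⨆ x, f x) := by rw [GFn]
    have hbdd : BddAbove (Set.range f) := Ordinal.bddAbove_range f
    have hb_ge : ∀ η (hη : η < ξ), GFn D k η (k-1) + 1 ≤ ⨆ x, f x := by
      intro η hη
      have := le_ciSup hbdd ((Ordinal.ToType.mk (o := ξ)) ⟨η, hη⟩)
      simpa [hf] using this
    have hb_lt : (⨆ x, f x) < κ.ord := by
      apply Ordinal.iSup_lt_ord
      · rw [Cardinal.mk_toType, hreg.cof_eq]
        exact Cardinal.lt_ord.mp hξ
      · intro x
        have hx : ((Ordinal.ToType.mk (o := ξ)).symm x).1 < ξ := ((Ordinal.ToType.mk (o := ξ)).symm x).2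
        have := (IH _ hx (hx.trans hξ)).1 (k-1) (by omega)
        show GFn D k ((Ordinal.ToType.mk (o := ξ)).symm x).1 (k-1) + 1 < κ.ord
        rw [Ordinal.add_one_eq_succ]
        exact hlim.succ_lt this.2.1
    have hstep := stepFn_props hD hb_lt
    have hξb : ξ ≤ ⨆ x, f x := by
      apply le_of_forall_lt
      intro η hη
      have h1 : η < GFn D k η (k-1) := ((IH η hη (hη.trans hξ)).1 (k-1) (by omega)).2.2.1
      calc η < GFn D k η (k-1) := h1
        _ < GFn D k η (k-1) + 1 := lt_add_one _
        _ ≤ _ := hb_ge η hη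
    constructor
    · intro i hi
      obtain ⟨h1, h2, h3, h4⟩ := hstep i hi
      rw [hGeq]
      exact ⟨h1, h3, lt_of_le_of_lt hξb h2, h4⟩
    · intro η hη
      have := (hstep 0 hk).2.1
      rw [hGeq]
      calc GFn D k η (k-1) < GFn D k η (k-1) + 1 := lt_add_one _
        _ ≤ ⨆ x, f x := hb_ge η hη
        _ < stepFn D (⨆ x, f x) 0 := this

lemma GFn_mono {κ : Cardinal.{0}} (hreg : κ.IsRegular) (hunc : ℵ₀ < κ)
    {D : ℕ → Set Ordinal} {k : ℕ} (hk : 0 < k)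
    (hD : ∀ i < k, CofinalIn κ.ord (D i)) {ξ : Ordinal} (hξ : ξ < κ.ord)
    {i j : ℕ} (hij : i ≤ j) (hj : j < k) : GFn D k ξ i ≤ GFn D k ξ j := by
  rcases Nat.lt_or_ge i j with h | h
  · exact (((GFn_main hreg hunc hk hD ξ hξ).1 j hj).2.2.2 i h).le
  · have : i = j := by omega
    subst this; exact le_rfl

lemma GFn_inj {κ : Cardinal.{0}} (hreg : κ.IsRegular) (hunc : ℵ₀ < κ)
    {D : ℕ → Set Ordinal} {k : ℕ} (hk : 0 < k)
    (hD : ∀ i < k, CofinalIn κ.ord (D i)) :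
    ∀ ξ < κ.ord, ∀ ξ' < κ.ord, ∀ i < k, ∀ j < k,
      GFn D k ξ i = GFn D k ξ' j → ξ = ξ' ∧ i = j := by
  have main := GFn_main hreg hunc hk hD
  have cross : ∀ ξ < κ.ord, ∀ ξ' < κ.ord, ξ < ξ' → ∀ i < k, ∀ j < k,
      GFn D k ξ i < GFn D k ξ' j := by
    intro ξ hξ ξ' hξ' hlt i hi j hj
    calc GFn D k ξ i ≤ GFn D k ξ (k-1) := GFn_mono hreg hunc hk hD hξ (by omega) (by omega)
      _ < GFn D k ξ' 0 := (main ξ' hξ').2 ξ hlt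
      _ ≤ GFn D k ξ' j := GFn_mono hreg hunc hk hD hξ' (by omega) hj
  intro ξ hξ ξ' hξ' i hi j hj heq
  rcases lt_trichotomy ξ ξ' with h | h | h
  · exact absurd heq (cross ξ hξ ξ' hξ' h i hi j hj).ne
  · subst h
    refine ⟨rfl, ?_⟩
    rcases lt_trichotomy i j with h' | h' | h'
    · exact absurd heq (((main ξ hξ).1 j hj).2.2.2 i h').ne
    · exact h'
    · exact absurd heq.symm (((main ξ hξ).1 i hi).2.2.2 j h').ne
  · exact absurd heq.symm (cross ξ' hξ' ξ hξ h j hj i hi).ne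

/-- Under C⁻(κ), for any κ-sized family 𝓐 of infinite subsets of ℕ and any `k ≥ 1`,
either some κ-sized subfamily has all k-wise intersections infinite, or there are
κ-sized subfamilies 𝓑₀, …, 𝓑_{k-1} with `⋂_{i<k} ⋃ 𝓑ᵢ` finite. -/
theorem statement_12 (κ : Cardinal.{0}) (hreg : κ.IsRegular) (hunc : ℵ₀ < κ)
    (hC : PrincipleCminus κ) (k : ℕ) (hk : 1 ≤ k)
    (𝓐 : Set (Set ℕ)) (hinf : ∀ A ∈ 𝓐, A.Infinite) (hcard : #𝓐 = κ) :
    (∃ 𝓑 ⊆ 𝓐, #𝓑 = κ ∧ ∀ F : Finset (Set ℕ), ↑F ⊆ 𝓑 → F.card = k →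
        (⋂₀ (F : Set (Set ℕ))).Infinite) ∨
    (∃ 𝓑 : Fin k → Set (Set ℕ), (∀ i, 𝓑 i ⊆ 𝓐 ∧ #(𝓑 i) = κ) ∧
        (⋂ i, ⋃₀ 𝓑 i).Finite) := by
  have hlim := Cardinal.isSuccLimit_ord hunc.le
  -- enumeration of 𝓐
  obtain ⟨e⟩ : Nonempty (κ.ord.ToType ≃ ↥𝓐) :=
    Cardinal.eq.mp (by rw [Cardinal.mk_toType, Cardinal.card_ord, hcard])
  set E : Ordinal → Set ℕ :=
    fun α => if h : α < κ.ord then (e (Ordinal.ToType.mk (o := κ.ord) ⟨α, h⟩) : Set ℕ) else ∅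
    with hE
  have hEmem : ∀ α, α < κ.ord → E α ∈ 𝓐 := by
    intro α hα
    simp only [hE, dif_pos hα]
    exact (e _).2
  have hEinj : ∀ α, α < κ.ord → ∀ β, β < κ.ord → E α = E β → α = β := by
    intro α hα β hβ h
    simp only [hE, dif_pos hα, dif_pos hβ] at h
    have h2 := e.injective (Subtype.coe_injective h)
    have h3 := (Ordinal.ToType.mk (o := κ.ord)).injective h2
    exact congrArg Subtype.val h3
  set A : Ordinal → ℕ → Set ℕ := fun α n => E α ∩ {m | n ≤ m} with hA
  set T : Set (List ℕ) := {t | t.length = k} with hT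
  rcases hC T A with ⟨S, hScof, h1⟩ | ⟨t, ht, D, hDcof, h2⟩
  · -- case (1)
    left
    refine ⟨E '' S, ?_, ?_, ?_⟩
    · rintro B ⟨α, hα, rfl⟩
      exact hEmem α (hScof.1 hα)
    · -- cardinality
      have hle : #(E '' S : Set (Set ℕ)) ≤ κ := by
        rw [← hcard]
        apply Cardinal.mk_le_mk_of_subset
        rintro B ⟨α, hα, rfl⟩
        exact hEmem α (hScof.1 hα)
      refine le_antisymm hle (le_of_not_gt ?_)
      intro hlt
      have hch : ∀ B : ↥(E '' S), ∃ α, α ∈ S ∧ E α = B.1 := by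
        rintro ⟨B, α, hα, rfl⟩
        exact ⟨α, hα, rfl⟩
      choose g hgS hgE using hch
      set f : ↥(E '' S) → Ordinal := fun B => g B + 1 with hfdef
      have hsup : (⨆ B, f B) < κ.ord := by
        apply Ordinal.iSup_lt_ord
        · rwa [hreg.cof_eq]
        · intro B
          show g B + 1 < κ.ord
          rw [Ordinal.add_one_eq_succ]
          exact hlim.succ_lt (hScof.1 (hgS B))
      obtain ⟨β, hβS, hβ⟩ := hScof.2 _ hsup
      set B : ↥(E '' S) := ⟨E β, β, hβS, rfl⟩ with hBdef
      have hgB : g B = β :=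
        hEinj _ (hScof.1 (hgS B)) _ (hScof.1 hβS) (hgE B)
      have : f B ≤ ⨆ B, f B := le_ciSup (Ordinal.bddAbove_range f) B
      rw [hfdef] at this
      simp only at this
      rw [hgB] at this
      exact absurd (lt_of_lt_of_le (lt_of_le_of_lt (le_of_lt (lt_add_one β)) (lt_of_le_of_lt this hβ)) le_rfl) (lt_irrefl β)
    · -- k-wise intersections infinite
      intro F hFsub hFk
      set eqv : ↥F ≃ Fin k := F.equivFin.trans (finCongr hFk) with heqv
      have hch : ∀ i : Fin k, ∃ α, α ∈ S ∧ E α = (eqv.symm i : Set ℕ) := by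
        intro i
        obtain ⟨α, hα, hEα⟩ := hFsub (eqv.symm i).2
        exact ⟨α, hα, hEα⟩
      choose α hαS hαE using hch
      have hαinj : Function.Injective α := by
        intro i j hij
        have : (eqv.symm i : Set ℕ) = (eqv.symm j : Set ℕ) := by
          rw [← hαE i, ← hαE j, hij]
        exact eqv.symm.injective (Subtype.coe_injective this)
      have key : ∀ n : ℕ, ∃ m, m ∈ ⋂₀ (F : Set (Set ℕ)) ∧ n ≤ m := by
        intro n
        set t : List ℕ := List.replicate k n with htdef
        have htlen : t.length = k := List.length_replicate (n := k) (a := n)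
        set s : Fin t.length → Ordinal := fun i => α (Fin.cast htlen i) with hsdef
        have hsinj : Function.Injective s := by
          intro i j hij
          have h5 := hαinj hij
          rw [Fin.ext_iff] at h5 ⊢
          simpa using h5
        obtain ⟨m, hm⟩ := h1 t htlen s hsinj (fun i => hαS _)
        rw [MatInt] at hm
        simp only [Set.mem_iInter] at hm
        refine ⟨m, ?_, ?_⟩
        · intro B hB
          have : B = (eqv.symm (eqv ⟨B, hB⟩) : Set ℕ) := by rw [Equiv.symm_apply_apply]
          rw [this, ← hαE (eqv ⟨B, hB⟩)]
          have hmi := hm (Fin.cast htlen.symm (eqv ⟨B, hB⟩))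
          rw [hA] at hmi
          have := hmi.1
          simpa [hsdef] using this
        · have hmi := hm ⟨0, by omega⟩
          rw [hA] at hmi
          have h2 := hmi.2
          have : t.get ⟨0, by omega⟩ = n := by
            simp [htdef]
          rwa [this] at h2
      intro hfin
      obtain ⟨c, hc⟩ := hfin.bddAbove
      obtain ⟨m, hm, hcm⟩ := key (c + 1)
      exact absurd (hc hm) (by omega)
  · -- case (2)
    right
    have hlen : t.length = k := ht
    subst hlen
    have hk0 : 0 < t.length := hk
    set D' : ℕ → Set Ordinal :=
      fun n => if h : n < t.length then D ⟨n, h⟩ else Set.Iio κ.ord with hD'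
    have hD'cof : ∀ i < t.length, CofinalIn κ.ord (D' i) := by
      intro i hi
      simp only [hD', dif_pos hi]
      exact hDcof ⟨i, hi⟩
    have main := GFn_main hreg hunc hk0 hD'cof
    have inj := GFn_inj hreg hunc hk0 hD'cof
    set J : κ.ord.ToType → Ordinal := fun x => ((Ordinal.ToType.mk (o := κ.ord)).symm x).1 with hJ
    have hJlt : ∀ x, J x < κ.ord := fun x => ((Ordinal.ToType.mk (o := κ.ord)).symm x).2
    have hJinj : Function.Injective J := fun x y h =>
      (Ordinal.ToType.mk (o := κ.ord)).symm.injective (Subtype.coe_injective h)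
    set 𝓑 : Fin t.length → Set (Set ℕ) :=
      fun i => Set.range (fun x : κ.ord.ToType => E (GFn D' t.length (J x) (i : ℕ))) with h𝓑
    have hGlt : ∀ (x : κ.ord.ToType) (i : ℕ), i < t.length → GFn D' t.length (J x) i < κ.ord :=
      fun x i hi => ((main (J x) (hJlt x)).1 i hi).2.1
    refine ⟨𝓑, fun i => ⟨?_, ?_⟩, ?_⟩
    · rintro B ⟨x, rfl⟩
      exact hEmem _ (hGlt x i i.2)
    · -- cardinality
      have hinj : Function.Injective (fun x : κ.ord.ToType => E (GFn D' t.length (J x) (i : ℕ))) := by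
        intro x y h
        have h2 := hEinj _ (hGlt x i i.2) _ (hGlt y i i.2) h
        have h3 := (inj _ (hJlt x) _ (hJlt y) _ i.2 _ i.2 h2).1
        exact hJinj h3
      rw [h𝓑]
      rw [Cardinal.mk_range_eq _ hinj, Cardinal.mk_toType, Cardinal.card_ord]
    · -- finiteness
      set N : ℕ := t.sum with hN
      apply Set.Finite.subset (Set.finite_Iic N)
      intro m hm
      by_contra hmN
      have hmN' : N < m := by simpa using hmN
      simp only [Set.mem_iInter] at hm
      have hch : ∀ i : Fin t.length, ∃ x : κ.ord.ToType, m ∈ E (GFn D' t.length (J x) (i : ℕ)) := by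
        intro i
        obtain ⟨B, hB, hmB⟩ := hm i
        obtain ⟨x, hx⟩ := hB
        exact ⟨x, by rw [← hx] at hmB; exact hmB⟩
      choose x hx using hch
      set s : Fin t.length → Ordinal := fun i => GFn D' t.length (J (x i)) (i : ℕ) with hs
      have hsinj : Function.Injective s := by
        intro i j hij
        exact Fin.ext (inj _ (hJlt _) _ (hJlt _) _ i.2 _ j.2 hij).2
      have hsD : ∀ i, s i ∈ D i := by
        intro i
        have h6 := ((main (J (x i)) (hJlt _)).1 (i : ℕ) i.2).1
        simp only [hD'] at h6
        rw [dif_pos i.2] at h6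
        exact h6
      have := h2 s hsinj hsD
      have hmem : m ∈ MatInt A t s := by
        rw [MatInt]
        simp only [Set.mem_iInter]
        intro i
        rw [hA]
        refine ⟨hx i, ?_⟩
        have : t.get i ≤ N := List.single_le_sum (by intro y _; omega) _ (t.get_mem i)
        simp only [Set.mem_setOf_eq]
        omega
      rw [this] at hmem
      exact hmem
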